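/- Let $v_1,\dots,v_M \in \mathbb{C}^N$ be points in general position, meaning that every subset of $\{v_1,\dots,v_M\}$ of cardinality at most $N$ is linearly independent. Let $Q$ be a homogeneous polynomial of degree $r$ in $N$ variables over $\mathbb{C}$ that vanishes with multiplicity at least $r-1$ at each point $v_i$. Then for every subset $S \subseteq \{1,\dots,M\}$ of cardinality $k$ with $k < r$, the polynomial $Q$ vanishes with multiplicity at least $r - k$ at every point of the linear span of $\{v_i : i \in S\}$. -/

import Mathlib

open MvPolynomial Polynomial


/-- A polynomial `Q ∈ ℂ[x_1, …, x_N]` vanishes with multiplicity at least `y` at a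
point `p ∈ ℂ^N` if every iterated partial derivative of `Q` of total order at most
`y - 1` (equivalently, of total order `< y`) evaluates to `0` at `p`. -/
def VanishesToOrder {σ : Type*} (Q : MvPolynomial σ ℂ) (p : σ → ℂ) (y : ℕ) : Prop :=
  ∀ L : List σ, L.length < y →
    MvPolynomial.eval p (L.foldr (fun i q => MvPolynomial.pderiv i q) Q) = 0

namespace Stmt6Aux

noncomputable def D {σ : Type*} (L : List σ) (Q : MvPolynomial σ ℂ) : MvPolynomial σ ℂ :=
  L.foldr (fun i q => MvPolynomial.pderiv i q) Q

lemma D_cons {σ : Type*} (i : σ) (L : List σ) (Q : MvPolynomial σ ℂ) :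
    D (i :: L) Q = pderiv i (D L Q) := rfl

lemma D_append {σ : Type*} (L L' : List σ) (Q : MvPolynomial σ ℂ) :
    D (L ++ L') Q = D L (D L' Q) := List.foldr_append ..

lemma vanishes_iff {σ : Type*} (Q : MvPolynomial σ ℂ) (p : σ → ℂ) (y : ℕ) :
    VanishesToOrder Q p y ↔ ∀ L : List σ, L.length < y → MvPolynomial.eval p (D L Q) = 0 :=
  Iff.rfl

lemma D_smul {σ : Type*} (L : List σ) (c : ℂ) (P : MvPolynomial σ ℂ) :
    D L (c • P) = c • D L P := by
  induction L with
  | nil => rfl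
  | cons i L ih => simp [D_cons, ih]

lemma D_sum {σ ι : Type*} (L : List σ) (s : Finset ι) (f : ι → MvPolynomial σ ℂ) :
    D L (∑ i ∈ s, f i) = ∑ i ∈ s, D L (f i) := by
  induction L with
  | nil => rfl
  | cons i L ih => simp [D_cons, ih]

lemma vanish_D {σ : Type*} {Q : MvPolynomial σ ℂ} {p : σ → ℂ} {y : ℕ}
    (h : VanishesToOrder Q p y) (L : List σ) :
    VanishesToOrder (D L Q) p (y - L.length) := by
  intro L' hL'
  rw [show (L'.foldr (fun i q => MvPolynomial.pderiv i q) (D L Q)) = D (L' ++ L) Q from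
    (D_append ..).symm]
  exact h _ (by simp only [List.length_append]; omega)

variable {N : ℕ}

noncomputable def dir (u : Fin N → ℂ) (Q : MvPolynomial (Fin N) ℂ) : MvPolynomial (Fin N) ℂ :=
  ∑ i : Fin N, u i • (pderiv i Q)

lemma vanish_dir {Q : MvPolynomial (Fin N) ℂ} {p : Fin N → ℂ} {y : ℕ} (u : Fin N → ℂ)
    (h : VanishesToOrder Q p y) : VanishesToOrder (dir u Q) p (y - 1) := by
  rw [vanishes_iff] at h ⊢
  intro L hL
  rw [dir, D_sum, map_sum]
  apply Finset.sum_eq_zero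
  intro i _
  rw [D_smul, MvPolynomial.smul_eval,
    show D L (pderiv i Q) = D (L ++ [i]) Q from (D_append L [i] Q).symm,
    h _ (by simp only [List.length_append, List.length_cons, List.length_nil]; omega), mul_zero]

lemma vanish_dir_iter {Q : MvPolynomial (Fin N) ℂ} {p : Fin N → ℂ} {y : ℕ} (u : Fin N → ℂ) (m : ℕ)
    (h : VanishesToOrder Q p y) : VanishesToOrder ((dir u)^[m] Q) p (y - m) := by
  induction m generalizing Q y with
  | zero => simpa using h
  | succ m ih =>
    rw [Function.iterate_succ_apply]
    have := ih (vanish_dir u h)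
    rwa [show y - 1 - m = y - (m + 1) by omega] at this

lemma homog_pderiv {σ : Type*} {Q : MvPolynomial σ ℂ} {n : ℕ} (h : Q.IsHomogeneous n) (i : σ) :
    (pderiv i Q).IsHomogeneous (n - 1) := by
  classical
  rw [Q.as_sum, map_sum]
  apply IsHomogeneous.sum
  intro d hd
  rw [pderiv_monomial]
  by_cases h0 : d i = 0
  · rw [h0]
    simpa using isHomogeneous_zero σ ℂ (n - 1)
  · apply isHomogeneous_monomial
    have hdeg : d.degree = n := by
      rw [Finsupp.degree_eq_weight_one]
      exact h (MvPolynomial.mem_support_iff.mp hd)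
    have hle : Finsupp.single i 1 ≤ d := by
      rw [Finsupp.single_le_iff]; omega
    have hsum : d - Finsupp.single i 1 + Finsupp.single i 1 = d := tsub_add_cancel_of_le hle
    have h1 : (Finsupp.single i (1:ℕ)).degree = 1 := by
      simp [Finsupp.degree_eq_weight_one, Finsupp.weight_apply, Finsupp.sum_single_index]
    have h2 : (d - Finsupp.single i 1).degree + (Finsupp.single i (1:ℕ)).degree = d.degree := by
      rw [Finsupp.degree_eq_weight_one, ← map_add, hsum]
    omega

lemma homog_dir {Q : MvPolynomial (Fin N) ℂ} {n : ℕ} (h : Q.IsHomogeneous n) (u : Fin N → ℂ) :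
    (dir u Q).IsHomogeneous (n - 1) := by
  rw [← mem_homogeneousSubmodule]
  exact Submodule.sum_mem _ fun i _ => Submodule.smul_mem _ _ (homog_pderiv h i)

lemma homog_D {σ : Type*} {Q : MvPolynomial σ ℂ} {n : ℕ} (h : Q.IsHomogeneous n) (L : List σ) :
    (D L Q).IsHomogeneous (n - L.length) := by
  induction L with
  | nil => simpa [D] using h
  | cons i L ih =>
    rw [D_cons]
    have := homog_pderiv ih i
    rwa [show n - L.length - 1 = n - (i :: L).length by simp; omega] at this

lemma derivative_aeval (s : Fin N → Polynomial ℂ) (Q : MvPolynomial (Fin N) ℂ) :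
    derivative (aeval s Q) = ∑ i : Fin N, derivative (s i) * aeval s (pderiv i Q) := by
  induction Q using MvPolynomial.induction_on with
  | C a => simp
  | add p q hp hq => simp [hp, hq, mul_add, Finset.sum_add_distrib]
  | mul_X p i hp =>
    classical
    have key : ∀ j, pderiv j (p * X i) = pderiv j p * X i + if j = i then p else 0 := by
      intro j
      rw [pderiv_mul]
      by_cases h : j = i <;> simp [h]
    simp only [map_mul, MvPolynomial.aeval_X, derivative_mul, hp, key, map_add, mul_add,
      Finset.sum_add_distrib, Finset.sum_mul, apply_ite (MvPolynomial.aeval s), map_zero, mul_ite,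
      mul_zero, Finset.sum_ite_eq', Finset.mem_univ, if_true, mul_assoc]
    rw [mul_comm ((MvPolynomial.aeval s) p) (derivative (s i))]

lemma eval_aeval (s : Fin N → Polynomial ℂ) (t : ℂ) (Q : MvPolynomial (Fin N) ℂ) :
    (aeval s Q).eval t = MvPolynomial.eval (fun i => (s i).eval t) Q := by
  rw [MvPolynomial.aeval_def]
  have h := MvPolynomial.eval₂_comp_left (Polynomial.evalRingHom t)
    (algebraMap ℂ (Polynomial ℂ)) s Q
  have h2 : (Polynomial.evalRingHom t).comp (algebraMap ℂ (Polynomial ℂ)) = RingHom.id ℂ := by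
    ext a; simp
  rw [h2] at h
  simpa [MvPolynomial.eval₂_id, Function.comp_def] using h

lemma natDegree_aeval_le (s : Fin N → Polynomial ℂ) (hs : ∀ i, (s i).natDegree ≤ 1)
    (Q : MvPolynomial (Fin N) ℂ) : (aeval s Q).natDegree ≤ Q.totalDegree := by
  rw [MvPolynomial.aeval_def, MvPolynomial.eval₂_eq]
  apply Polynomial.natDegree_sum_le_of_forall_le
  intro d hd
  refine le_trans Polynomial.natDegree_mul_le ?_
  have : (algebraMap ℂ (Polynomial ℂ)) (Q.coeff d) = Polynomial.C (Q.coeff d) := rfl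
  rw [this, Polynomial.natDegree_C, zero_add]
  refine le_trans (Polynomial.natDegree_prod_le _ _) ?_
  refine le_trans (Finset.sum_le_sum (fun i _ => ?_)) (MvPolynomial.le_totalDegree hd)
  calc (s i ^ d i).natDegree ≤ d i * (s i).natDegree := Polynomial.natDegree_pow_le
    _ ≤ d i * 1 := Nat.mul_le_mul_left _ (hs i)
    _ = d i := Nat.mul_one _

lemma eval_smul_homog {Q : MvPolynomial (Fin N) ℂ} {n : ℕ} (h : Q.IsHomogeneous n) (c : ℂ)
    (x : Fin N → ℂ) :
    MvPolynomial.eval (c • x) Q = c ^ n * MvPolynomial.eval x Q := by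
  rw [MvPolynomial.eval_eq, MvPolynomial.eval_eq, Finset.mul_sum]
  simp only [Pi.smul_apply, smul_eq_mul]
  apply Finset.sum_congr rfl
  intro d hd
  have hdeg : ∑ i ∈ d.support, d i = n := by
    have h1 := h (MvPolynomial.mem_support_iff.mp hd)
    rw [show (Finsupp.weight 1 : (Fin N →₀ ℕ) →+ ℕ) = Finsupp.degree from
      Finsupp.degree_eq_weight_one.symm, Finsupp.degree_apply] at h1
    exact h1
  rw [show (∏ i ∈ d.support, (c * x i) ^ d i) =
      (∏ i ∈ d.support, c ^ d i) * ∏ i ∈ d.support, x i ^ d i by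
    rw [← Finset.prod_mul_distrib]; exact Finset.prod_congr rfl fun i _ => mul_pow ..]
  rw [Finset.prod_pow_eq_pow_sum, hdeg]
  ring

lemma derivative_aeval_line (a b : Fin N → ℂ) (P : MvPolynomial (Fin N) ℂ) :
    derivative (MvPolynomial.aeval
        (fun i => Polynomial.C (a i) + Polynomial.X * Polynomial.C (b i)) P) =
      MvPolynomial.aeval (fun i => Polynomial.C (a i) + Polynomial.X * Polynomial.C (b i))
        (dir b P) := by
  rw [derivative_aeval, dir, map_sum]
  apply Finset.sum_congr rfl
  intro i _
  rw [map_smul, Polynomial.smul_eq_C_mul]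
  congr 1
  simp

lemma eval_aeval_line (a b : Fin N → ℂ) (t : ℂ) (P : MvPolynomial (Fin N) ℂ) :
    (MvPolynomial.aeval
        (fun i => Polynomial.C (a i) + Polynomial.X * Polynomial.C (b i)) P).eval t =
      MvPolynomial.eval (a + t • b) P := by
  simp only [eval_aeval]
  have heq : (fun i => (Polynomial.C (a i) + Polynomial.X * Polynomial.C (b i)).eval t)
      = a + t • b := by
    funext i
    simp only [Polynomial.eval_add, Polynomial.eval_C, Polynomial.eval_mul, Polynomial.eval_X,
      Pi.add_apply, Pi.smul_apply, smul_eq_mul]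
  rw [heq]

lemma main (N : ℕ) :
    ∀ (n : ℕ) {M : ℕ} (v : Fin M → Fin N → ℂ) (d : ℕ) (Q : MvPolynomial (Fin N) ℂ),
    Q.IsHomogeneous d → (∀ i, VanishesToOrder Q (v i) (d - 1)) →
    ∀ S : Finset (Fin M), S.card ≤ n → S.card < d →
    ∀ p ∈ Submodule.span ℂ (v '' (S : Set (Fin M))), MvPolynomial.eval p Q = 0 := by
  intro n
  induction n with
  | zero =>
    intro M v d Q hQ _ S hcard hlt p hp
    rw [Nat.le_zero, Finset.card_eq_zero] at hcard
    subst hcard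
    simp only [Finset.coe_empty, Set.image_empty, Submodule.span_empty, Submodule.mem_bot] at hp
    subst hp
    rw [show MvPolynomial.eval (0 : Fin N → ℂ) Q = MvPolynomial.constantCoeff Q by
      rw [MvPolynomial.eval_zero]]
    rw [MvPolynomial.constantCoeff_eq]
    apply hQ.coeff_eq_zero
    simp only [map_zero]
    omega
  | succ n ih =>
    intro M v d Q hQ hv S hcard hlt p hp
    by_cases hn : S.card ≤ n
    · exact ih v d Q hQ hv S hn hlt p hp
    have hcS : S.card = n + 1 := by omega
    have hd2 : n + 1 < d := hcS ▸ hlt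
    obtain ⟨j, hj⟩ : S.Nonempty := Finset.card_pos.mp (by omega)
    set S' := S.erase j with hS'
    have hS'card : S'.card = n := by
      rw [hS', Finset.card_erase_of_mem hj, hcS]
      omega
    set w := v j with hw
    have himg : (v '' (S : Set (Fin M))) = insert w (v '' (S' : Set (Fin M))) := by
      rw [show (S : Set (Fin M)) = insert j (S' : Set (Fin M)) by
        rw [hS', ← Finset.coe_insert, Finset.insert_erase hj], Set.image_insert_eq]
    rw [himg, Submodule.mem_span_insert] at hp
    obtain ⟨a, z, hz, rfl⟩ := hp
    set f := MvPolynomial.aeval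
      (fun i => Polynomial.C (z i) + Polynomial.X * Polynomial.C (w i)) Q with hfdef
    set g := MvPolynomial.aeval
      (fun i => Polynomial.C (w i) + Polynomial.X * Polynomial.C (z i)) Q with hgdef
    -- iterated derivatives of g
    have hgiter : ∀ m, derivative^[m] g = MvPolynomial.aeval
        (fun i => Polynomial.C (w i) + Polynomial.X * Polynomial.C (z i)) ((dir z)^[m] Q) := by
      intro m
      induction m with
      | zero => simp [hgdef]
      | succ m ihm =>
        rw [Function.iterate_succ_apply', ihm, derivative_aeval_line,
          show dir z ((dir z)^[m] Q) = (dir z)^[m + 1] Q from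
            (Function.iterate_succ_apply' (dir z) m Q).symm]
    -- high coefficients of g vanish
    have hgcoeff : ∀ m, m + 2 ≤ d → g.coeff m = 0 := by
      intro m hm
      have h1 := Polynomial.coeff_iterate_derivative g 0 (k := m)
      rw [zero_add, Nat.descFactorial_self] at h1
      have h2 : (derivative^[m] g).coeff 0 = 0 := by
        rw [hgiter m, Polynomial.coeff_zero_eq_eval_zero, eval_aeval_line,
          show w + (0 : ℂ) • z = w by simp]
        exact vanish_dir_iter z m (hv j) [] (by simp only [List.length_nil]; omega)
      rw [h2, eq_comm, nsmul_eq_mul] at h1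
      rcases mul_eq_zero.mp h1 with h4 | h4
      · exact absurd h4 (by exact_mod_cast Nat.factorial_ne_zero m)
      · exact h4
    -- low coefficients of f vanish (by induction hypothesis)
    have hf0 : f.coeff 0 = 0 := by
      rw [hfdef, Polynomial.coeff_zero_eq_eval_zero, eval_aeval_line,
        show z + (0 : ℂ) • w = z by simp]
      exact ih v d Q hQ hv S' (le_of_eq hS'card) (by omega) z hz
    have hf1 : f.coeff 1 = 0 := by
      have h1 := Polynomial.coeff_iterate_derivative f 0 (k := 1)
      rw [zero_add, Nat.descFactorial_self, Nat.factorial_one, one_smul,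
        Function.iterate_one] at h1
      rw [← h1, hfdef, derivative_aeval_line, Polynomial.coeff_zero_eq_eval_zero,
        eval_aeval_line, show z + (0 : ℂ) • w = z by simp]
      exact ih v (d - 1) (dir w Q) (homog_dir hQ w) (fun i => vanish_dir w (hv i)) S'
        (le_of_eq hS'card) (by omega) z hz
    -- degree bound on g
    have hgnd : g.natDegree < d + 1 := by
      refine lt_of_le_of_lt (le_trans (natDegree_aeval_le _ (fun i => ?_) Q)
        hQ.totalDegree_le) (Nat.lt_succ_self d)
      refine le_trans (Polynomial.natDegree_add_le _ _) ?_
      simp only [Polynomial.natDegree_C]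
      refine max_le (by omega) (le_trans Polynomial.natDegree_mul_le ?_)
      simp [Polynomial.natDegree_X_le]
    set hpol : Polynomial ℂ :=
      ∑ m ∈ Finset.range (d + 1), Polynomial.C (g.coeff m) * Polynomial.X ^ (d - m) with hhdef
    have hfh : f = hpol := by
      have key : ∀ t : ℂ, t ≠ 0 → f.eval t = hpol.eval t := by
        intro t ht
        have e1 : f.eval t = MvPolynomial.eval (z + t • w) Q := by
          rw [hfdef, eval_aeval_line]
        have e2 : g.eval t⁻¹ = MvPolynomial.eval (w + t⁻¹ • z) Q := by
          rw [hgdef, eval_aeval_line]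
        have e3 : z + t • w = t • (w + t⁻¹ • z) := by
          funext i
          simp only [Pi.add_apply, Pi.smul_apply, smul_eq_mul]
          field_simp
          ring
        have e4 : f.eval t = t ^ d * g.eval t⁻¹ := by
          rw [e1, e3, eval_smul_homog hQ, e2]
        rw [e4, hhdef, Polynomial.eval_finset_sum, Polynomial.eval_eq_sum_range' hgnd,
          Finset.mul_sum]
        apply Finset.sum_congr rfl
        intro m hm
        rw [Polynomial.eval_mul, Polynomial.eval_C, Polynomial.eval_pow, Polynomial.eval_X]
        have hmd : m ≤ d := by
          have := Finset.mem_range.mp hm; omega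
        rw [show t ^ (d - m) = t ^ d * (t⁻¹) ^ m by
          rw [inv_pow, eq_comm, mul_inv_eq_iff_eq_mul₀ (pow_ne_zero _ ht), ← pow_add]
          congr 1; omega]
        ring
      have hsub : f - hpol = 0 := by
        apply Polynomial.eq_zero_of_infinite_isRoot
        apply Set.Infinite.mono (s := ({0}ᶜ : Set ℂ))
        · intro t ht
          simp only [Set.mem_compl_iff, Set.mem_singleton_iff] at ht
          simp [Polynomial.IsRoot, Polynomial.eval_sub, key t ht]
        · exact Set.Finite.infinite_compl (Set.finite_singleton 0)
      exact sub_eq_zero.mp hsub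
    have hfz : f = 0 := by
      apply Polynomial.ext
      intro m
      rw [Polynomial.coeff_zero]
      match m with
      | 0 => exact hf0
      | 1 => exact hf1
      | (m + 2) =>
        rw [hfh, hhdef, Polynomial.finset_sum_coeff]
        apply Finset.sum_eq_zero
        intro k hk
        rw [Polynomial.coeff_C_mul, Polynomial.coeff_X_pow]
        by_cases hmk : m + 2 = d - k
        · rw [if_pos hmk, mul_one]
          apply hgcoeff
          have := Finset.mem_range.mp hk
          omega
        · rw [if_neg hmk, mul_zero]
    have efin : MvPolynomial.eval (a • w + z) Q = f.eval a := by
      rw [hfdef, eval_aeval_line, add_comm]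
    rw [efin, hfz, Polynomial.eval_zero]

end Stmt6Aux

/-- Let `v_1, …, v_M ∈ ℂ^N` be in general position (every subset of cardinality at
most `N` is linearly independent), and let `Q` be a homogeneous polynomial of degree
`r` in `N` variables that vanishes with multiplicity at least `r - 1` at each `v_i`.
Then for every subset `S ⊆ {1, …, M}` of cardinality `k < r`, the polynomial `Q`
vanishes with multiplicity at least `r - k` at every point of the linear span of
`{v_i : i ∈ S}`. -/
theorem stmt6 (N M r : ℕ) (v : Fin M → (Fin N → ℂ))
    (hgen : ∀ s : Finset (Fin M), s.card ≤ N →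
      LinearIndependent ℂ (fun i : s => v i))
    (Q : MvPolynomial (Fin N) ℂ) (hQ : Q.IsHomogeneous r)
    (hv : ∀ i, VanishesToOrder Q (v i) (r - 1))
    (S : Finset (Fin M)) (hS : S.card < r) :
    ∀ p ∈ Submodule.span ℂ (v '' (S : Set (Fin M))),
      VanishesToOrder Q p (r - S.card) := by
  intro p hp L hL
  have hQ' : (Stmt6Aux.D L Q).IsHomogeneous (r - L.length) := Stmt6Aux.homog_D hQ L
  have hv' : ∀ i, VanishesToOrder (Stmt6Aux.D L Q) (v i) (r - L.length - 1) := by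
    intro i
    have := Stmt6Aux.vanish_D (hv i) L
    rwa [show r - 1 - L.length = r - L.length - 1 by omega] at this
  exact Stmt6Aux.main N S.card v (r - L.length) (Stmt6Aux.D L Q) hQ' hv' S le_rfl
    (by omega) p hp
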